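/- Let A be a unital associative ℂ-algebra, let q ∈ ℂ, and let x,y ∈ A satisfy the Hecke quadratic relations (x−1)(x−q) = 0 and (y−1)(y−q) = 0. Then the pair (x,y) satisfies the A₃(0,0,−q) relations if and only if the braid relation xyx = yxy holds. (This expresses that the Hecke algebra H_n(q) is the coset of A_n(0,0,−q) by the Hecke quadratic relation.) -/
import Mathlib


/-- The pair `(x, y)` satisfies the defining relations of the algebra `A₃(a,b,c)`. -/
def SatisfiesA3 {A : Type*} [Ring A] [Algebra ℂ A] (a b c : ℂ) (x y : A) : Prop :=
  x ^ 2 * y - y * x ^ 2 = x * y ^ 2 - y ^ 2 * x ∧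
  (y * x) * (x + y) - (x + y) * (y * x) =
    a • (x ^ 3 - y ^ 3) + b • (x ^ 2 - y ^ 2) - c • (x - y) ∧
  a • (x * y ^ 3 - x ^ 3 * y) = -b • (y ^ 2 * x - y * x ^ 2) ∧
  a • (y ^ 3 * x - y * x ^ 3) = -b • (y ^ 2 * x - y * x ^ 2) ∧
  a ^ 2 • (y ^ 4 * x - y * x ^ 4) = (b ^ 2 + a * c) • (y ^ 2 * x - y * x ^ 2)

/-- For elements satisfying the Hecke quadratic relations, the `A₃(0,0,-q)` relations
are equivalent to the braid relation: the Hecke algebra is the coset of `A₃(0,0,-q)`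
by the Hecke quadratic relation. -/
theorem hecke_coset_A3 {A : Type*} [Ring A] [Algebra ℂ A] (q : ℂ) (x y : A)
    (hx : (x - 1) * (x - q • (1 : A)) = 0) (hy : (y - 1) * (y - q • (1 : A)) = 0) :
    SatisfiesA3 0 0 (-q) x y ↔ x * y * x = y * x * y := by
  have hx2 : x ^ 2 = q • x + x - q • (1 : A) := by
    apply eq_of_sub_eq_zero
    rw [← hx]
    simp only [sub_mul, mul_sub, mul_smul_comm, mul_one, one_mul, sq, smul_sub]
    abel
  have hy2 : y ^ 2 = q • y + y - q • (1 : A) := by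
    apply eq_of_sub_eq_zero
    rw [← hy]
    simp only [sub_mul, mul_sub, mul_smul_comm, mul_one, one_mul, sq, smul_sub]
    abel
  have hR1 : x ^ 2 * y - y * x ^ 2 = x * y ^ 2 - y ^ 2 * x := by
    rw [hx2, hy2]
    simp only [sub_mul, mul_sub, add_mul, mul_add, smul_mul_assoc, mul_smul_comm,
      one_mul, mul_one]
    abel
  have hR2 : (y * x) * (x + y) - (x + y) * (y * x)
      = (y * x * y - x * y * x) + q • (x - y) := by
    have e : (y * x) * (x + y) - (x + y) * (y * x)
        = y * x ^ 2 + y * x * y - x * y * x - y ^ 2 * x := by noncomm_ring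
    rw [e, hx2, hy2]
    simp only [sub_mul, mul_sub, add_mul, mul_add, smul_mul_assoc, mul_smul_comm,
      one_mul, mul_one, smul_sub]
    abel
  constructor
  · rintro ⟨-, h2, -, -, -⟩
    simp only [zero_smul, neg_neg, zero_add, zero_sub] at h2
    rw [hR2] at h2
    rw [neg_smul, neg_neg] at h2
    have h3 : y * x * y - x * y * x = 0 :=
      add_right_cancel (b := q • (x - y)) (h2.trans (zero_add _).symm)
    exact (sub_eq_zero.mp h3).symm
  · intro hb
    refine ⟨hR1, ?_, by simp, by simp, by norm_num⟩
    rw [hR2, hb]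
    simp only [zero_smul, neg_neg, zero_add, zero_sub, neg_smul, neg_neg, sub_self, zero_add]
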